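/- arXiv:2012.01652 — 3 statements merged into one kernel-verified Lean document; each statement's English description precedes it below -/
import Mathlib

section
/- Let (Ω, μ) be a probability space and Q : Ω → ℝ^M an integrable random vector with componentwise expectation q̂ = E[Q]. Let φ : ℝ^M → ℝ be such that φ ∘ Q is integrable and φ has a gradient at q̂ and at a point s ∈ ℝ^M. Then the expected Bregman divergence decomposes as E[d_φ(Q, s)] = E[d_φ(Q, q̂)] + d_φ(q̂, s), where d_φ(q, p) = φ(q) − φ(p) − ⟨q − p, ∇φ(p)⟩. -/
open MeasureTheory RealInnerProductSpace

/-- The expected Bregman divergence decomposes as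
`E[d_φ(Q, s)] = E[d_φ(Q, q̂)] + d_φ(q̂, s)` where `q̂ = E[Q]` (componentwise). -/
theorem expected_bregman_decomposition
    {M : ℕ} {Ω : Type*} [MeasurableSpace Ω] (μ : Measure Ω) [IsProbabilityMeasure μ]
    (Q : Ω → EuclideanSpace ℝ (Fin M))
    (hQint : ∀ m, Integrable (fun ω => Q ω m) μ)
    (φ : EuclideanSpace ℝ (Fin M) → ℝ)
    (hφQ : Integrable (fun ω => φ (Q ω)) μ)
    (qhat : EuclideanSpace ℝ (Fin M))
    (hqhat : ∀ m, qhat m = ∫ ω, Q ω m ∂μ)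
    (s : EuclideanSpace ℝ (Fin M))
    (gs ghat : EuclideanSpace ℝ (Fin M))
    (hgs : HasGradientAt φ gs s) (hghat : HasGradientAt φ ghat qhat) :
    ∫ ω, (φ (Q ω) - φ s - ⟪Q ω - s, gs⟫) ∂μ
      = (∫ ω, (φ (Q ω) - φ qhat - ⟪Q ω - qhat, ghat⟫) ∂μ)
        + (φ qhat - φ s - ⟪qhat - s, gs⟫) := by
  have hint : ∀ (p g : EuclideanSpace ℝ (Fin M)),
      Integrable (fun ω => ⟪Q ω - p, g⟫) μ := by
    intro p g
    have : (fun ω => ⟪Q ω - p, g⟫) =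
        fun ω => ∑ m : Fin M, (Q ω m - p m) * g m := by
      funext ω
      simp [PiLp.inner_apply, mul_comm]
    rw [this]
    refine integrable_finset_sum _ fun m _ => ?_
    have h : Integrable (fun ω => Q ω m - p m) μ := (hQint m).sub (integrable_const (p m))
    exact h.mul_const (g m)
  have hval : ∀ (p g : EuclideanSpace ℝ (Fin M)),
      ∫ ω, ⟪Q ω - p, g⟫ ∂μ = ⟪qhat - p, g⟫ := by
    intro p g
    have h1 : (fun ω => ⟪Q ω - p, g⟫) =
        fun ω => ∑ m : Fin M, (Q ω m - p m) * g m := by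
      funext ω; simp [PiLp.inner_apply, mul_comm]
    have hm : ∀ m ∈ Finset.univ, Integrable (fun ω => (Q ω m - p m) * g m) μ := by
      intro m _
      have h : Integrable (fun ω => Q ω m - p m) μ := (hQint m).sub (integrable_const (p m))
      exact h.mul_const (g m)
    rw [h1, integral_finset_sum _ hm]
    have h2 : ⟪qhat - p, g⟫ = ∑ m : Fin M, (qhat m - p m) * g m := by
      simp [PiLp.inner_apply, mul_comm]
    rw [h2]
    refine Finset.sum_congr rfl fun m _ => ?_
    rw [integral_mul_const, integral_sub (hQint m) (integrable_const (p m)),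
      integral_const, hqhat m]
    simp
  have hS : Integrable (fun ω => φ s + ⟪Q ω - s, gs⟫) μ :=
    (integrable_const (φ s)).add (hint s gs)
  have hH : Integrable (fun ω => φ qhat + ⟪Q ω - qhat, ghat⟫) μ :=
    (integrable_const (φ qhat)).add (hint qhat ghat)
  rw [show (fun ω => φ (Q ω) - φ s - ⟪Q ω - s, gs⟫) =
      fun ω => φ (Q ω) - (φ s + ⟪Q ω - s, gs⟫) by funext ω; ring,
    show (fun ω => φ (Q ω) - φ qhat - ⟪Q ω - qhat, ghat⟫) =
      fun ω => φ (Q ω) - (φ qhat + ⟪Q ω - qhat, ghat⟫) by funext ω; ring,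
    integral_sub hφQ hS, integral_sub hφQ hH,
    integral_add (integrable_const (φ s)) (hint s gs),
    integral_add (integrable_const (φ qhat)) (hint qhat ghat),
    integral_const, integral_const, hval s gs, hval qhat ghat]
  simp
  ring
end

section
/- Let (Ω, μ) be a probability space and Q : Ω → ℝ^M an integrable random vector with componentwise expectation q̂ = E[Q]. Let S ⊆ ℝ^M be a convex set containing q̂ and containing the values of Q almost surely, and let φ : ℝ^M → ℝ be strictly convex on S with φ ∘ Q integrable and φ differentiable at q̂. Then E[d_φ(Q, q̂)] = E[φ(Q)] − φ(q̂) (the Jensen gap), and for every s ∈ S with s ≠ q̂ at which φ is differentiable, E[d_φ(Q, s)] > E[d_φ(Q, q̂)]; that is, q̂ = E[Q] is the unique minimizer of s ↦ E[d_φ(Q, s)] among such points. -/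
open MeasureTheory RealInnerProductSpace

open Filter Topology in
/-- Gradient inequality for convex functions: `⟪g, q - s⟫ ≤ φ q - φ s`. -/
lemma aux_grad_le {E : Type*} [NormedAddCommGroup E] [InnerProductSpace ℝ E] [CompleteSpace E]
    {S : Set E} {φ : E → ℝ} (hc : ConvexOn ℝ S φ) {s q : E}
    (hs : s ∈ S) (hq : q ∈ S) {g : E} (hg : HasGradientAt φ g s) :
    ⟪g, q - s⟫ ≤ φ q - φ s := by
  set v := q - s with hv
  have hline : HasDerivAt (fun t : ℝ => φ (s + t • v)) ⟪g, v⟫ 0 := by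
    have h1 : HasDerivAt (fun t : ℝ => s + t • v) v 0 := by
      simpa using ((hasDerivAt_id (0:ℝ)).smul_const v).const_add s
    have hF : HasFDerivAt φ ((InnerProductSpace.toDual ℝ E) g) (s + (0:ℝ) • v) := by
      simpa using hg.hasFDerivAt
    have h2 := hF.comp_hasDerivAt 0 h1
    simpa [Function.comp_def] using h2
  have htend := hasDerivAt_iff_tendsto_slope.mp hline
  have htend' : Tendsto (slope (fun t : ℝ => φ (s + t • v)) 0) (𝓝[>] 0) (𝓝 ⟪g, v⟫) :=
    htend.mono_left (nhdsWithin_mono _ (fun x hx => ne_of_gt hx))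
  refine le_of_tendsto htend' ?_
  filter_upwards [Ioc_mem_nhdsGT_of_mem (by norm_num : (0:ℝ) ∈ Set.Ico 0 1)] with t ht
  have ht0 : 0 < t := ht.1
  have ht1 : t ≤ 1 := ht.2
  have hpt : s + t • v = (1 - t) • s + t • q := by
    rw [hv]; module
  have hconv' : φ (s + t • v) ≤ (1 - t) * φ s + t * φ q := by
    rw [hpt]
    simpa [smul_eq_mul] using hc.2 hs hq (by linarith : (0:ℝ) ≤ 1 - t) (le_of_lt ht0) (by ring)
  rw [slope_def_field]
  have : ((φ (s + t • v)) - φ (s + (0:ℝ) • v)) / (t - 0) ≤ φ q - φ s := by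
    rw [div_le_iff₀ (by simpa using ht0)]
    simp only [zero_smul, add_zero, sub_zero]
    nlinarith [hconv']
  simpa [div_sub_div_same, slope] using this

/-- Strict gradient inequality for strictly convex functions. -/
lemma aux_grad_lt {E : Type*} [NormedAddCommGroup E] [InnerProductSpace ℝ E] [CompleteSpace E]
    {S : Set E} (hS : Convex ℝ S) {φ : E → ℝ} (hc : StrictConvexOn ℝ S φ) {s q : E}
    (hs : s ∈ S) (hq : q ∈ S) (hne : q ≠ s) {g : E} (hg : HasGradientAt φ g s) :
    ⟪g, q - s⟫ < φ q - φ s := by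
  set m : E := (1/2 : ℝ) • s + (1/2 : ℝ) • q with hm
  have hmS : m ∈ S := hS hs hq (by norm_num) (by norm_num) (by norm_num)
  have h1 : ⟪g, m - s⟫ ≤ φ m - φ s := aux_grad_le hc.convexOn hs hmS hg
  have h2 : φ m < (1/2 : ℝ) * φ s + (1/2 : ℝ) * φ q :=
    hc.2 hs hq (Ne.symm hne) (by norm_num) (by norm_num) (by norm_num)
  have h3 : m - s = (1/2 : ℝ) • (q - s) := by rw [hm]; module
  rw [h3, real_inner_smul_right] at h1
  linarith

/-- Bregman representative: the componentwise mean `q̂ = E[Q]` attains expected Bregman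
divergence equal to the Jensen gap `E[φ(Q)] - φ(q̂)`, and is the unique minimizer of
`s ↦ E[d_φ(Q, s)]` over points of `S` at which `φ` is differentiable. -/
theorem bregman_representative_unique_minimizer
    {M : ℕ} {Ω : Type*} [MeasurableSpace Ω] (μ : Measure Ω) [IsProbabilityMeasure μ]
    (Q : Ω → EuclideanSpace ℝ (Fin M))
    (hQint : ∀ m, Integrable (fun ω => Q ω m) μ)
    (S : Set (EuclideanSpace ℝ (Fin M))) (hS : Convex ℝ S)
    (qhat : EuclideanSpace ℝ (Fin M))
    (hqhat : ∀ m, qhat m = ∫ ω, Q ω m ∂μ)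
    (hqhatS : qhat ∈ S)
    (hQS : ∀ᵐ ω ∂μ, Q ω ∈ S)
    (φ : EuclideanSpace ℝ (Fin M) → ℝ)
    (hφstrict : StrictConvexOn ℝ S φ)
    (hφQ : Integrable (fun ω => φ (Q ω)) μ)
    (ghat : EuclideanSpace ℝ (Fin M))
    (hghat : HasGradientAt φ ghat qhat) :
    (∫ ω, (φ (Q ω) - φ qhat - ⟪Q ω - qhat, ghat⟫) ∂μ
        = (∫ ω, φ (Q ω) ∂μ) - φ qhat)
    ∧ (∀ s ∈ S, s ≠ qhat → ∀ gs : EuclideanSpace ℝ (Fin M), HasGradientAt φ gs s →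
        (∫ ω, (φ (Q ω) - φ qhat - ⟪Q ω - qhat, ghat⟫) ∂μ)
          < ∫ ω, (φ (Q ω) - φ s - ⟪Q ω - s, gs⟫) ∂μ) := by
  have hinner_int : ∀ (c g : EuclideanSpace ℝ (Fin M)),
      Integrable (fun ω => ⟪Q ω - c, g⟫) μ := by
    intro c g
    have : (fun ω => ⟪Q ω - c, g⟫) =
        fun ω => ∑ m, (Q ω m - c m) * g m := by
      funext ω
      simp [PiLp.inner_apply, RCLike.inner_apply, mul_comm]
    rw [this]
    exact integrable_finset_sum _ fun m _ =>
      (((hQint m).sub (integrable_const _)).mul_const _)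
  have hinner_eq : ∀ (c g : EuclideanSpace ℝ (Fin M)),
      ∫ ω, ⟪Q ω - c, g⟫ ∂μ = ⟪qhat - c, g⟫ := by
    intro c g
    have h1 : (fun ω => ⟪Q ω - c, g⟫) =
        fun ω => ∑ m, (Q ω m - c m) * g m := by
      funext ω
      simp [PiLp.inner_apply, RCLike.inner_apply, mul_comm]
    have hterm : ∀ m : Fin M, Integrable (fun ω => (Q ω m - c m) * g m) μ :=
      fun m => (((hQint m).sub (integrable_const _)).mul_const _)
    rw [h1, integral_finset_sum _ (fun m _ => hterm m)]
    have h2 : ∀ m, ∫ ω, (Q ω m - c m) * g m ∂μ = (qhat m - c m) * g m := by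
      intro m
      rw [integral_mul_const, integral_sub (hQint m) (integrable_const _)]
      simp [hqhat m]
    simp only [h2]
    simp [PiLp.inner_apply, RCLike.inner_apply, mul_comm]
  have hbreg : ∀ (c g : EuclideanSpace ℝ (Fin M)),
      ∫ ω, (φ (Q ω) - φ c - ⟪Q ω - c, g⟫) ∂μ
        = (∫ ω, φ (Q ω) ∂μ) - φ c - ⟪qhat - c, g⟫ := by
    intro c g
    have ha : Integrable (fun ω => φ (Q ω) - φ c) μ := hφQ.sub (integrable_const _)
    rw [integral_sub ha (hinner_int c g), integral_sub hφQ (integrable_const _), hinner_eq]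
    simp
  constructor
  · rw [hbreg]; simp
  · intro s hsS hne gs hgs
    rw [hbreg, hbreg]
    simp only [sub_self, inner_zero_left]
    have := aux_grad_lt hS hφstrict hsS hqhatS (Ne.symm hne) hgs
    rw [real_inner_comm] at this
    have h0 : (⟪(0 : EuclideanSpace ℝ (Fin M)), ghat⟫ : ℝ) = 0 := inner_zero_left _
    linarith [this]
end

section
/- Let (Ω, μ) be a probability space and Q : Ω → ℝ^M a random vector whose entries are almost surely strictly positive, with each Q_m and each log Q_m integrable, and let q̂_m = E[Q_m] (so q̂ has strictly positive entries). Let p ∈ ℝ^M have strictly positive entries, set γ̂ = (1/M) ∑_{m=1}^M log(q̂_m/p_m), and define the sample processing vector h ∈ ℝ^M by h_m = (1/M)( (1 + γ̂)/q̂_m − 1/p_m ). Then E[−⟨Q, h⟩] = E[D_IS(Q, p)] − E[D_IS(Q, q̂)], and consequently |E[−⟨Q, h⟩] − E[D_IS(Q, p)]| = E[D_IS(Q, q̂)]. -/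
open MeasureTheory Real Finset

/-- For a.s. entrywise-positive `Q`, the Itakura–Saito-minimizing sample processing
vector `h m = (1/M)((1 + γ̂)/q̂ m - 1/p m)` with `γ̂ = (1/M) ∑ m, log (q̂ m / p m)`
satisfies `E[-⟨Q, h⟩] = E[D_IS(Q, p)] - E[D_IS(Q, q̂)]`, hence the distortion
`|E[-⟨Q, h⟩] - E[D_IS(Q, p)]|` equals the Jensen gap `E[D_IS(Q, q̂)]`. -/
theorem IS_spectral_surrogate_distortion
    {M : ℕ} {Ω : Type*} [MeasurableSpace Ω] (μ : Measure Ω) [IsProbabilityMeasure μ]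
    (Q : Ω → Fin M → ℝ)
    (hQpos : ∀ᵐ ω ∂μ, ∀ m, 0 < Q ω m)
    (hQint : ∀ m, Integrable (fun ω => Q ω m) μ)
    (hQlogint : ∀ m, Integrable (fun ω => Real.log (Q ω m)) μ)
    (qhat : Fin M → ℝ)
    (hqhat : ∀ m, qhat m = ∫ ω, Q ω m ∂μ)
    (p : Fin M → ℝ) (hp : ∀ m, 0 < p m)
    (γhat : ℝ) (hγhat : γhat = (1 / (M : ℝ)) * ∑ m, Real.log (qhat m / p m))
    (h : Fin M → ℝ)
    (hh : ∀ m, h m = (1 / (M : ℝ)) * ((1 + γhat) / qhat m - 1 / p m)) :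
    (∫ ω, -(∑ m, Q ω m * h m) ∂μ
        = (∫ ω, (1 / (M : ℝ)) * ∑ m, (Q ω m / p m - 1 - Real.log (Q ω m / p m)) ∂μ)
          - ∫ ω, (1 / (M : ℝ)) * ∑ m, (Q ω m / qhat m - 1 - Real.log (Q ω m / qhat m)) ∂μ)
    ∧ |(∫ ω, -(∑ m, Q ω m * h m) ∂μ)
          - ∫ ω, (1 / (M : ℝ)) * ∑ m, (Q ω m / p m - 1 - Real.log (Q ω m / p m)) ∂μ|
        = ∫ ω, (1 / (M : ℝ)) * ∑ m, (Q ω m / qhat m - 1 - Real.log (Q ω m / qhat m)) ∂μ := by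
  -- positivity of qhat
  have hqpos : ∀ m, 0 < qhat m := by
    intro m
    rw [hqhat m]
    have hpos : ∀ᵐ ω ∂μ, 0 < Q ω m := hQpos.mono fun ω hω => hω m
    rw [integral_pos_iff_support_of_nonneg_ae (hpos.mono fun ω hω => hω.le) (hQint m)]
    have h1 : μ (Function.support fun ω => Q ω m)ᶜ = 0 := by
      refine measure_mono_null ?_ (ae_iff.mp hpos)
      intro ω hω
      simp only [Function.mem_support, Set.mem_compl_iff, not_not] at hω
      simp [hω]
    refine pos_iff_ne_zero.mpr fun hs => ?_
    have h2 := measure_union_le (μ := μ) (Function.support fun ω => Q ω m)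
      (Function.support fun ω => Q ω m)ᶜ
    rw [Set.union_compl_self, h1, hs, measure_univ] at h2
    simp at h2
  -- the per-coordinate divergence integral
  set L : Fin M → ℝ := fun m => ∫ ω, Real.log (Q ω m) ∂μ with hL
  have key : ∀ (c : Fin M → ℝ), (∀ m, 0 < c m) →
      ∫ ω, (1 / (M : ℝ)) * ∑ m, (Q ω m / c m - 1 - Real.log (Q ω m / c m)) ∂μ
        = (1 / (M : ℝ)) * ∑ m, (qhat m / c m - 1 - (L m - Real.log (c m))) := by
    intro c hc
    have hae : ∀ m : Fin M, (fun ω => Q ω m / c m - 1 - Real.log (Q ω m / c m))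
        =ᵐ[μ] (fun ω => Q ω m / c m - 1 - (Real.log (Q ω m) - Real.log (c m))) := by
      intro m
      filter_upwards [hQpos] with ω hω
      rw [Real.log_div (hω m).ne' (hc m).ne']
    have hint : ∀ m : Fin M,
        Integrable (fun ω => Q ω m / c m - 1 - Real.log (Q ω m / c m)) μ := by
      intro m
      refine Integrable.congr ?_ (hae m).symm
      exact (((hQint m).div_const _).sub (integrable_const 1)).sub
        ((hQlogint m).sub (integrable_const _))
    calc ∫ ω, (1 / (M : ℝ)) * ∑ m, (Q ω m / c m - 1 - Real.log (Q ω m / c m)) ∂μ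
        = (1 / (M : ℝ)) * ∫ ω, ∑ m, (Q ω m / c m - 1 - Real.log (Q ω m / c m)) ∂μ := by
          rw [integral_const_mul]
      _ = (1 / (M : ℝ)) * ∑ m, ∫ ω, (Q ω m / c m - 1 - Real.log (Q ω m / c m)) ∂μ := by
          rw [integral_finset_sum _ fun m _ => hint m]
      _ = (1 / (M : ℝ)) * ∑ m, (qhat m / c m - 1 - (L m - Real.log (c m))) := by
          congr 1
          refine Finset.sum_congr rfl fun m _ => ?_
          have h1 : Integrable (fun ω => Q ω m / c m - 1) μ :=
            ((hQint m).div_const _).sub (integrable_const 1)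
          have h2 : Integrable (fun ω => Real.log (Q ω m) - Real.log (c m)) μ :=
            (hQlogint m).sub (integrable_const _)
          rw [integral_congr_ae (hae m), integral_sub h1 h2,
            integral_sub ((hQint m).div_const _) (integrable_const 1),
            integral_sub (hQlogint m) (integrable_const _),
            integral_div, integral_const]
          simp [hqhat m, hL]
  have hIp := key p hp
  have hIq := key qhat hqpos
  -- first integral
  have hI1 : ∫ ω, -(∑ m, Q ω m * h m) ∂μ = -∑ m, qhat m * h m := by
    rw [integral_neg, integral_finset_sum _ fun m _ => (hQint m).mul_const (h m)]
    congr 1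
    exact Finset.sum_congr rfl fun m _ => by rw [integral_mul_const, ← hqhat m]
  -- algebraic identity
  have halg : -∑ m, qhat m * h m
      = (1 / (M : ℝ)) * ∑ m, (qhat m / p m - 1 - (L m - Real.log (p m)))
        - (1 / (M : ℝ)) * ∑ m, (qhat m / qhat m - 1 - (L m - Real.log (qhat m))) := by
    rcases Nat.eq_zero_or_pos M with rfl | hM
    · simp
    have hM0 : (M : ℝ) ≠ 0 := Nat.cast_ne_zero.mpr hM.ne'
    rw [← mul_sub, ← Finset.sum_sub_distrib]
    have : ∀ m : Fin M, (qhat m / p m - 1 - (L m - Real.log (p m)))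
        - (qhat m / qhat m - 1 - (L m - Real.log (qhat m)))
        = qhat m / p m - 1 - Real.log (qhat m / p m) := by
      intro m
      rw [div_self (hqpos m).ne', Real.log_div (hqpos m).ne' (hp m).ne']
      ring
    rw [Finset.sum_congr rfl fun m _ => this m]
    have hterm : ∀ m : Fin M, qhat m * h m
        = (1 / (M : ℝ)) * ((1 + γhat) - qhat m / p m) := by
      intro m
      rw [hh m, mul_left_comm]
      congr 1
      rw [mul_sub, mul_one_div, mul_div_assoc', mul_comm, mul_div_assoc,
        div_self (hqpos m).ne', mul_one]
    rw [Finset.sum_congr rfl fun m _ => hterm m, ← Finset.mul_sum]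
    simp only [Finset.sum_sub_distrib, Finset.sum_const, card_univ, Fintype.card_fin,
      nsmul_eq_mul, mul_one]
    rw [hγhat]
    field_simp
    ring
  have heq1 : ∫ ω, -(∑ m, Q ω m * h m) ∂μ
      = (∫ ω, (1 / (M : ℝ)) * ∑ m, (Q ω m / p m - 1 - Real.log (Q ω m / p m)) ∂μ)
        - ∫ ω, (1 / (M : ℝ)) * ∑ m, (Q ω m / qhat m - 1 - Real.log (Q ω m / qhat m)) ∂μ := by
    rw [hI1, hIp, hIq, halg]
  refine ⟨heq1, ?_⟩
  have hnn : 0 ≤ ∫ ω, (1 / (M : ℝ)) * ∑ m, (Q ω m / qhat m - 1 - Real.log (Q ω m / qhat m)) ∂μ := by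
    refine integral_nonneg_of_ae ?_
    filter_upwards [hQpos] with ω hω
    refine mul_nonneg (by positivity) (Finset.sum_nonneg fun m _ => ?_)
    have hx : 0 < Q ω m / qhat m := div_pos (hω m) (hqpos m)
    linarith [Real.log_le_sub_one_of_pos hx]
  rw [heq1]
  rw [sub_sub_cancel_left, abs_neg, abs_of_nonneg hnn]
end
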